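/- Let q = 3^m, and let f(x) = x^{q+2} on F_{q^2}. Then its differential spectrum is ω_0 = (q^2+q-2)/2, ω_2 = (q^2-q)/2, ω_q = 1, where ω_i = #{b ∈ F_{q^2} : δ_f(1,b) = i}; in particular the differential uniformity of f equals q and f is locally APN. -/

import Mathlib

set_option maxHeartbeats 1000000

open Polynomial in
theorem root_bound_aux (K : Type*) [Field K] [Fintype K] [DecidableEq K] (q : ℕ)
    (hq : 3 ≤ q) (a : K) :
    ((Finset.univ : Finset K).filter (fun t => t^q + a * t = 0)).card ≤ q := by
  classical
  set P : K[X] := X^q + C a * X with hP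
  have hdeg : P.natDegree ≤ q := by
    rw [hP]; compute_degree; omega
  have hcoeff : P.coeff q = 1 := by
    rw [hP]
    simp only [Polynomial.coeff_add, Polynomial.coeff_X_pow, if_pos rfl,
      Polynomial.coeff_C_mul, Polynomial.coeff_X]
    rw [if_neg (by omega : ¬(1 = q))]
    simp
  have hne : P ≠ 0 := by
    intro h
    rw [h, Polynomial.coeff_zero] at hcoeff
    exact one_ne_zero hcoeff.symm
  calc ((Finset.univ : Finset K).filter (fun t => t^q + a * t = 0)).card
      ≤ P.roots.toFinset.card := by
        apply Finset.card_le_card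
        intro t ht
        simp only [Finset.mem_filter] at ht
        rw [Multiset.mem_toFinset, Polynomial.mem_roots hne]
        simp [hP, Polynomial.IsRoot, ht.2]
    _ ≤ Multiset.card P.roots := Multiset.toFinset_card_le _
    _ ≤ P.natDegree := P.card_roots'
    _ ≤ q := hdeg

/-- Differential spectrum of x^{q+2} over F_{q²} when q = 3^m:
ω₀ = (q²+q-2)/2, ω₂ = (q²-q)/2, ω_q = 1; the differential uniformity equals q,
and f is locally APN: max{δ_f(1,b) : b ∉ F_3} = 2. -/
theorem diff_spectrum_char_three (m q : ℕ) (hm : 0 < m) (hq : q = 3 ^ m)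
    (K : Type*) [Field K] [Fintype K] (hK : Fintype.card K = q ^ 2) :
    2 * Nat.card {b : K //
        Nat.card {x : K // (x + 1) ^ (q + 2) - x ^ (q + 2) = b} = 0} + 2
      = q ^ 2 + q ∧
    2 * Nat.card {b : K //
        Nat.card {x : K // (x + 1) ^ (q + 2) - x ^ (q + 2) = b} = 2}
      = q ^ 2 - q ∧
    Nat.card {b : K //
        Nat.card {x : K // (x + 1) ^ (q + 2) - x ^ (q + 2) = b} = q} = 1 ∧
    (∀ b : K, Nat.card {x : K // (x + 1) ^ (q + 2) - x ^ (q + 2) = b} ≤ q) ∧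
    (∀ b : K, b ≠ 0 → b ≠ 1 → b ≠ -1 →
      Nat.card {x : K // (x + 1) ^ (q + 2) - x ^ (q + 2) = b} ≤ 2) ∧
    (∃ b : K, b ≠ 0 ∧ b ≠ 1 ∧ b ≠ -1 ∧
      Nat.card {x : K // (x + 1) ^ (q + 2) - x ^ (q + 2) = b} = 2) := by
  classical
  -- numeric facts
  have hq3 : 3 ≤ q := by
    rw [hq]
    calc 3 = 3^1 := (pow_one 3).symm
      _ ≤ 3^m := Nat.pow_le_pow_right (by norm_num) hm
  have hq0 : 0 < q := by omega
  have hqodd : Odd q := by rw [hq]; exact Odd.pow ⟨1, rfl⟩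
  -- characteristic 3
  obtain ⟨p, hp⟩ := CharP.exists K
  haveI := hp
  have hpp : p.Prime := CharP.char_is_prime K p
  haveI : Fact p.Prime := ⟨hpp⟩
  obtain ⟨n, hn⟩ := FiniteField.card K p
  have hp3 : p = 3 := by
    have hd : p ∣ 3 ^ (m*2) := by
      rw [pow_mul, ← hq, ← hK, hn.2]
      exact dvd_pow_self p n.2.ne'
    exact (Nat.prime_dvd_prime_iff_eq hpp (by norm_num)).mp (hpp.dvd_of_dvd_pow hd)
  subst hp3
  have h3 : (3:K) = 0 := by exact_mod_cast CharP.cast_eq_zero K 3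
  have h2K : (2:K) ≠ 0 := by
    intro h; apply one_ne_zero (α := K); linear_combination h3 - h
  have frob : ∀ x y : K, (x+y)^q = x^q + y^q := by
    intro x y; rw [hq]; exact add_pow_char_pow x y 3 m
  have negpow : ∀ x : K, (-x)^q = -(x^q) := fun x => hqodd.neg_pow x
  have subpow : ∀ x y : K, (x - y)^q = x^q - y^q := by
    intro x y; rw [sub_eq_add_neg, frob, negpow, sub_eq_add_neg]
  have powqq : ∀ x : K, (x^q)^q = x := by
    intro x; rw [← pow_mul, ← pow_two, ← hK]; exact FiniteField.pow_card x
  -- the difference function identity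
  have hD : ∀ x : K, (x+1)^(q+2) - x^(q+2) = (x-1)*(x - x^q) + 1 := by
    intro x
    have h1 : (x+1)^q = x^q + 1 := by rw [frob, one_pow]
    rw [pow_add, pow_add, h1]
    linear_combination (x * x^q + x) * h3
  have hDcard : ∀ b : K, Nat.card {x : K // (x + 1) ^ (q + 2) - x ^ (q + 2) = b}
      = Nat.card {x : K // (x-1)*(x - x^q) + 1 = b} :=
    fun b => Nat.card_congr (Equiv.subtypeEquivRight (fun x => by rw [hD x]))
  -- key finsets
  set Kset : Finset K := Finset.univ.filter (fun t => t + t^q = 0) with hKsetdef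
  set Fset : Finset K := Finset.univ.filter (fun t => t^q = t) with hFsetdef
  have hKle : Kset.card ≤ q := by
    have h := root_bound_aux K q hq3 1
    have he : Kset = Finset.univ.filter (fun t : K => t^q + 1 * t = 0) := by
      apply Finset.filter_congr
      intro x _
      rw [one_mul]
      constructor <;> intro hh <;> linear_combination hh
    rw [he]; exact h
  have hFle : Fset.card ≤ q := by
    have h := root_bound_aux K q hq3 (-1)
    have he : Fset = Finset.univ.filter (fun t : K => t^q + (-1) * t = 0) := by
      apply Finset.filter_congr
      intro x _
      constructor <;> intro hh <;> linear_combination hh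
    rw [he]; exact h
  -- fibers of the trace map g c = c + c^q
  have hfiber : ∀ s : K, (∃ c₀ : K, c₀ + c₀^q = s) →
      (Finset.univ.filter (fun c : K => c + c^q = s)).card = Kset.card := by
    rintro s ⟨c₀, hc₀⟩
    apply Finset.card_bij (fun c _ => c - c₀)
    · intro a ha
      simp only [Finset.mem_filter, Finset.mem_univ, true_and] at ha
      simp only [hKsetdef, Finset.mem_filter, Finset.mem_univ, true_and]
      rw [subpow]
      linear_combination ha - hc₀
    · intro a₁ _ a₂ _ h
      exact sub_left_injective h
    · intro t ht
      simp only [hKsetdef, Finset.mem_filter, Finset.mem_univ, true_and] at ht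
      refine ⟨t + c₀, ?_, by ring⟩
      simp only [Finset.mem_filter, Finset.mem_univ, true_and]
      rw [frob]
      linear_combination ht + hc₀
  have himF : Finset.univ.image (fun c : K => c + c^q) ⊆ Fset := by
    intro s hs
    rcases Finset.mem_image.mp hs with ⟨c, _, rfl⟩
    simp only [hFsetdef, Finset.mem_filter, Finset.mem_univ, true_and]
    rw [frob, powqq]
    ring
  have hcount : q^2 = (Finset.univ.image (fun c : K => c + c^q)).card * Kset.card := by
    have h1 : (Finset.univ : Finset K).card
        = ∑ s ∈ Finset.univ.image (fun c : K => c + c^q),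
            (Finset.univ.filter (fun c : K => c + c^q = s)).card :=
      Finset.card_eq_sum_card_fiberwise (fun x _ => Finset.mem_image_of_mem _ (Finset.mem_univ x))
    rw [← hK, ← Finset.card_univ, h1,
      Finset.sum_congr rfl (fun s hs => hfiber s (by
        rcases Finset.mem_image.mp hs with ⟨c, _, hc⟩; exact ⟨c, hc⟩)),
      Finset.sum_const, smul_eq_mul]
  have himle : (Finset.univ.image (fun c : K => c + c^q)).card ≤ q :=
    le_trans (Finset.card_le_card himF) hFle
  have hKq : Kset.card = q := by nlinarith [hcount, himle, hKle]
  have himq : (Finset.univ.image (fun c : K => c + c^q)).card = q := by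
    nlinarith [hcount, himle, hKle]
  have hFq : Fset.card = q := le_antisymm hFle (by rw [← himq]; exact Finset.card_le_card himF)
  have himeq : Finset.univ.image (fun c : K => c + c^q) = Fset :=
    Finset.eq_of_subset_of_card_le himF (by rw [himq, hFq])
  -- the set of "nonsquare traces"
  set NS : Finset K := (Kset.erase 0).image (fun t => t^2) with hNSdef
  have hNSmem : ∀ s : K, s ∈ NS ↔ ∃ t : K, (t + t^q = 0 ∧ t ≠ 0) ∧ t^2 = s := by
    intro s
    simp only [hNSdef, Finset.mem_image, Finset.mem_erase, hKsetdef, Finset.mem_filter,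
      Finset.mem_univ, true_and]
    constructor
    · rintro ⟨t, ⟨hne, hk⟩, hsq⟩; exact ⟨t, ⟨hk, hne⟩, hsq⟩
    · rintro ⟨t, ⟨hk, hne⟩, hsq⟩; exact ⟨t, ⟨hne, hk⟩, hsq⟩
  have h0Kset : (0:K) ∈ Kset := by
    simp only [hKsetdef, Finset.mem_filter, Finset.mem_univ, true_and]
    rw [zero_pow hq0.ne']; ring
  have hNS0 : (0:K) ∉ NS := by
    rw [hNSmem]
    rintro ⟨t, ⟨_, hne⟩, hsq⟩
    exact hne (by simpa using pow_eq_zero_iff (two_ne_zero) |>.mp hsq)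
  have hnegmem : ∀ t : K, t + t^q = 0 → (-t) + (-t)^q = 0 := by
    intro t h; rw [negpow]; linear_combination -h
  have hneg_ne : ∀ t : K, t ≠ 0 → t ≠ -t := by
    intro t h0 he
    apply h0
    have h2t : (2:K) * t = 0 := by linear_combination he
    exact (mul_eq_zero.mp h2t).resolve_left h2K
  have hNS2 : NS.card * 2 = q - 1 := by
    have h1 : (Kset.erase 0).card
        = ∑ s ∈ NS, ((Kset.erase 0).filter (fun t => t^2 = s)).card :=
      Finset.card_eq_sum_card_fiberwise (fun t ht => Finset.mem_image_of_mem _ ht)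
    have h2 : ∀ s ∈ NS, ((Kset.erase 0).filter (fun t => t^2 = s)).card = 2 := by
      intro s hs
      obtain ⟨t₀, ⟨hk₀, hn₀⟩, hs₀⟩ := (hNSmem s).mp hs
      have hset : (Kset.erase 0).filter (fun t => t^2 = s) = {t₀, -t₀} := by
        ext t
        simp only [Finset.mem_filter, Finset.mem_erase, Finset.mem_insert,
          Finset.mem_singleton, hKsetdef, Finset.mem_univ, true_and]
        constructor
        · rintro ⟨⟨hne, hk⟩, hsq⟩
          have hfac : (t - t₀) * (t + t₀) = 0 := by linear_combination hsq - hs₀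
          rcases mul_eq_zero.mp hfac with h | h
          · left; exact sub_eq_zero.mp h
          · right; exact eq_neg_of_add_eq_zero_left h
        · rintro (rfl | rfl)
          · exact ⟨⟨hn₀, hk₀⟩, hs₀⟩
          · exact ⟨⟨neg_ne_zero.mpr hn₀, hnegmem t₀ hk₀⟩, by linear_combination hs₀⟩
      rw [hset, Finset.card_pair (hneg_ne t₀ hn₀)]
    rw [Finset.sum_congr rfl h2, Finset.sum_const, smul_eq_mul,
      Finset.card_erase_of_mem h0Kset, hKq] at h1
    omega
  -- cardinality of the solution-parameter set
  have hcard2 : ∀ s : K, (∃ t : K, (t + t^q = 0 ∧ t ≠ 0) ∧ t^2 = s) →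
      Nat.card {t : K // (t + t^q = 0 ∧ t ≠ 0) ∧ t^2 = s} = 2 := by
    rintro s ⟨t₀, ⟨hk₀, hn₀⟩, hs₀⟩
    have hset : {t : K | (t + t^q = 0 ∧ t ≠ 0) ∧ t^2 = s} = {t₀, -t₀} := by
      ext t
      simp only [Set.mem_setOf_eq, Set.mem_insert_iff, Set.mem_singleton_iff]
      constructor
      · rintro ⟨⟨hk, hne⟩, hsq⟩
        have hfac : (t - t₀) * (t + t₀) = 0 := by linear_combination hsq - hs₀
        rcases mul_eq_zero.mp hfac with h | h
        · left; exact sub_eq_zero.mp h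
        · right; exact eq_neg_of_add_eq_zero_left h
      · rintro (rfl | rfl)
        · exact ⟨⟨hk₀, hn₀⟩, hs₀⟩
        · exact ⟨⟨hnegmem t₀ hk₀, neg_ne_zero.mpr hn₀⟩, by linear_combination hs₀⟩
    calc Nat.card {t : K // (t + t^q = 0 ∧ t ≠ 0) ∧ t^2 = s}
        = Nat.card ({t : K | (t + t^q = 0 ∧ t ≠ 0) ∧ t^2 = s} : Set K) := rfl
      _ = ({t₀, -t₀} : Set K).ncard := by rw [hset, Nat.card_coe_set_eq]
      _ = 2 := Set.ncard_pair (hneg_ne t₀ hn₀)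
  -- master computation of δ
  have hdelta : ∀ b : K, Nat.card {x : K // (x + 1) ^ (q + 2) - x ^ (q + 2) = b}
      = if b = 1 then q else (if (b-1) + (b-1)^q ∈ NS then 2 else 0) := by
    intro b
    rw [hDcard b]
    by_cases hb : b = 1
    · subst hb
      rw [if_pos rfl]
      have hiff : ∀ x : K, ((x-1)*(x - x^q) + 1 = 1) ↔ x^q = x := by
        intro x
        constructor
        · intro h
          have hfac : (x-1)*(x - x^q) = 0 := by linear_combination h
          rcases mul_eq_zero.mp hfac with h' | h'
          · have hx1 : x = 1 := by linear_combination h'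
            rw [hx1, one_pow]
          · linear_combination -h'
        · intro h; rw [h]; ring
      rw [Nat.card_congr (Equiv.subtypeEquivRight hiff), Nat.card_eq_fintype_card,
        Fintype.card_subtype]
      exact hFq
    · rw [if_neg hb]
      have hcne : b - 1 ≠ 0 := sub_ne_zero.mpr hb
      have hsubt : ∀ t : K, t + t^q = 0 → t ≠ 0 → t^2 = (b-1) + (b-1)^q →
          (1 + (b-1) * t⁻¹) - (1 + (b-1) * t⁻¹)^q = t := by
        intro t hk hn hs
        have ht' : t⁻¹ * t = 1 := inv_mul_cancel₀ hn
        have htq : t^q = -t := by linear_combination hk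
        have hxq : (1 + (b-1) * t⁻¹)^q = 1 - (b-1)^q * t⁻¹ := by
          rw [frob, one_pow, mul_pow, inv_pow, htq, inv_neg]
          ring
        rw [hxq]
        linear_combination (-t⁻¹) * hs + t * ht'
      have key1 : ∀ x : K, (x-1)*(x - x^q) + 1 = b →
          ((x - x^q) + (x - x^q)^q = 0 ∧ (x - x^q) ≠ 0) ∧ (x - x^q)^2 = (b-1) + (b-1)^q := by
        intro x hx
        have hprod : (x-1)*(x - x^q) = b - 1 := by linear_combination hx
        have htq : (x - x^q)^q = x^q - x := by rw [subpow, powqq]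
        have hne : x - x^q ≠ 0 := by
          intro h0
          apply hcne
          rw [← hprod, h0, mul_zero]
        refine ⟨⟨by rw [htq]; ring, hne⟩, ?_⟩
        have hcq : (b-1)^q = (x^q - 1) * (x^q - x) := by
          rw [← hprod, mul_pow, subpow, subpow, one_pow, powqq]
        rw [hcq, ← hprod]
        ring
      have key2 : ∀ t : K, ((t + t^q = 0 ∧ t ≠ 0) ∧ t^2 = (b-1) + (b-1)^q) →
          ((1 + (b-1) * t⁻¹) - 1)*((1 + (b-1) * t⁻¹) - (1 + (b-1) * t⁻¹)^q) + 1 = b := by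
        rintro t ⟨⟨hk, hn⟩, hs⟩
        rw [hsubt t hk hn hs]
        have ht' : t⁻¹ * t = 1 := inv_mul_cancel₀ hn
        linear_combination (b-1) * ht'
      have hEq : Nat.card {x : K // (x-1)*(x - x^q) + 1 = b}
          = Nat.card {t : K // (t + t^q = 0 ∧ t ≠ 0) ∧ t^2 = (b-1) + (b-1)^q} := by
        apply Nat.card_congr
        refine ⟨fun x => ⟨x.1 - x.1^q, key1 x.1 x.2⟩,
          fun t => ⟨1 + (b-1) * t.1⁻¹, key2 t.1 t.2⟩, ?_, ?_⟩
        · rintro ⟨x, hx⟩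
          apply Subtype.ext
          simp only
          have hprod : (x-1)*(x - x^q) = b - 1 := by linear_combination hx
          have hne : x - x^q ≠ 0 := ((key1 x hx).1).2
          have ht' : (x - x^q) * (x - x^q)⁻¹ = 1 := mul_inv_cancel₀ hne
          linear_combination (x-1) * ht' - (x - x^q)⁻¹ * hprod
        · rintro ⟨t, ht⟩
          apply Subtype.ext
          simp only
          exact hsubt t ht.1.1 ht.1.2 ht.2
      rw [hEq]
      by_cases hns : (b-1) + (b-1)^q ∈ NS
      · rw [if_pos hns]
        exact hcard2 _ ((hNSmem _).mp hns)
      · rw [if_neg hns]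
        have he : IsEmpty {t : K // (t + t^q = 0 ∧ t ≠ 0) ∧ t^2 = (b-1) + (b-1)^q} :=
          ⟨fun t => hns ((hNSmem _).mpr ⟨t.1, t.2⟩)⟩
        exact Nat.card_of_isEmpty
  -- counting the b's with given δ-value
  have hsubcard : ∀ k : ℕ, Nat.card {b : K //
        Nat.card {x : K // (x + 1) ^ (q + 2) - x ^ (q + 2) = b} = k}
      = (Finset.univ.filter (fun b : K =>
          (if b = 1 then q else (if (b-1) + (b-1)^q ∈ NS then 2 else 0)) = k)).card := by
    intro k
    rw [Nat.card_congr (Equiv.subtypeEquivRight (fun b => by rw [hdelta b])),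
      Nat.card_eq_fintype_card, Fintype.card_subtype]
  have h10 : (1:K) - 1 + ((1:K)-1)^q = 0 := by
    rw [sub_self, zero_pow hq0.ne', add_zero]
  -- ω₂ count
  have hmemcard : (Finset.univ.filter (fun b : K => (b-1) + (b-1)^q ∈ NS)).card
      = NS.card * q := by
    have himg : Finset.univ.filter (fun b : K => (b-1) + (b-1)^q ∈ NS)
        = (Finset.univ.filter (fun c : K => c + c^q ∈ NS)).image (fun c => c + 1) := by
      ext b
      simp only [Finset.mem_filter, Finset.mem_univ, true_and, Finset.mem_image]
      constructor
      · intro h; exact ⟨b - 1, h, by ring⟩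
      · rintro ⟨c, hcm, rfl⟩
        simpa using hcm
    have hsum : (Finset.univ.filter (fun c : K => c + c^q ∈ NS)).card
        = ∑ s ∈ NS, (Finset.univ.filter (fun c : K => c + c^q = s)).card := by
      rw [Finset.card_eq_sum_card_fiberwise (f := fun c : K => c + c^q)
        (s := Finset.univ.filter (fun c : K => c + c^q ∈ NS)) (t := NS) (fun c hc => (Finset.mem_filter.mp hc).2)]
      apply Finset.sum_congr rfl
      intro s hs
      congr 1
      ext c
      simp only [Finset.mem_filter, Finset.mem_univ, true_and]
      constructor
      · rintro ⟨_, h⟩; exact h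
      · intro h; exact ⟨by rw [h]; exact hs, h⟩
    rw [himg, Finset.card_image_of_injective _ (add_left_injective 1), hsum,
      Finset.sum_congr rfl (fun s hs => by
        apply hfiber
        have hsF : s ∈ Finset.univ.image (fun c : K => c + c^q) := by
          rw [himeq]
          obtain ⟨t, ⟨hk, hn⟩, hsq⟩ := (hNSmem s).mp hs
          simp only [hFsetdef, Finset.mem_filter, Finset.mem_univ, true_and]
          have htq : t^q = -t := by linear_combination hk
          rw [← hsq, ← pow_mul, mul_comm, pow_mul, htq]
          ring
        rcases Finset.mem_image.mp hsF with ⟨c₀, _, hc₀⟩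
        exact ⟨c₀, hc₀⟩),
      Finset.sum_const, smul_eq_mul, hKq]
  have homega2 : (Finset.univ.filter (fun b : K =>
      (if b = 1 then q else (if (b-1) + (b-1)^q ∈ NS then 2 else 0)) = 2)).card
      = NS.card * q := by
    have hfe : Finset.univ.filter (fun b : K =>
        (if b = 1 then q else (if (b-1) + (b-1)^q ∈ NS then 2 else 0)) = 2)
        = Finset.univ.filter (fun b : K => (b-1) + (b-1)^q ∈ NS) := by
      apply Finset.filter_congr
      intro b _
      by_cases hb : b = 1
      · subst hb
        rw [if_pos rfl]
        simp only [h10]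
        constructor
        · intro h; omega
        · intro h; exact absurd h hNS0
      · rw [if_neg hb]
        by_cases hns : (b-1) + (b-1)^q ∈ NS
        · simp [hns]
        · simp [hns]
    rw [hfe, hmemcard]
  -- ω_q count
  have homegaq : (Finset.univ.filter (fun b : K =>
      (if b = 1 then q else (if (b-1) + (b-1)^q ∈ NS then 2 else 0)) = q)).card = 1 := by
    have hfe : Finset.univ.filter (fun b : K =>
        (if b = 1 then q else (if (b-1) + (b-1)^q ∈ NS then 2 else 0)) = q) = {1} := by
      ext b
      simp only [Finset.mem_filter, Finset.mem_univ, true_and, Finset.mem_singleton]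
      by_cases hb : b = 1
      · subst hb; simp
      · rw [if_neg hb]
        constructor
        · intro h
          by_cases hns : (b-1)+(b-1)^q ∈ NS
          · rw [if_pos hns] at h; omega
          · rw [if_neg hns] at h; omega
        · intro h; exact absurd h hb
    rw [hfe, Finset.card_singleton]
  -- ω_0 count
  have homega0 : (Finset.univ.filter (fun b : K =>
      (if b = 1 then q else (if (b-1) + (b-1)^q ∈ NS then 2 else 0)) = 0)).card
      = (Finset.univ.filter (fun b : K => ¬((b-1) + (b-1)^q ∈ NS))).card - 1 := by
    have hfe : Finset.univ.filter (fun b : K =>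
        (if b = 1 then q else (if (b-1) + (b-1)^q ∈ NS then 2 else 0)) = 0)
        = (Finset.univ.filter (fun b : K => ¬((b-1) + (b-1)^q ∈ NS))).erase 1 := by
      ext b
      simp only [Finset.mem_filter, Finset.mem_univ, true_and, Finset.mem_erase]
      by_cases hb : b = 1
      · subst hb
        rw [if_pos rfl]
        constructor
        · intro h; omega
        · rintro ⟨h, _⟩; exact absurd rfl h
      · rw [if_neg hb]
        by_cases hns : (b-1)+(b-1)^q ∈ NS
        · rw [if_pos hns]
          constructor
          · intro h; omega
          · rintro ⟨_, h⟩; exact absurd hns h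
        · rw [if_neg hns]
          exact ⟨fun _ => ⟨hb, hns⟩, fun _ => rfl⟩
    rw [hfe, Finset.card_erase_of_mem]
    simp only [Finset.mem_filter, Finset.mem_univ, true_and, h10]
    exact hNS0
  have hmem1 : (1:K) ∈ Finset.univ.filter (fun b : K => ¬((b-1) + (b-1)^q ∈ NS)) := by
    simp only [Finset.mem_filter, Finset.mem_univ, true_and, h10]
    exact hNS0
  have hsplitcnt : (Finset.univ.filter (fun b : K => (b-1) + (b-1)^q ∈ NS)).card
      + (Finset.univ.filter (fun b : K => ¬((b-1) + (b-1)^q ∈ NS))).card = q^2 := by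
    rw [Finset.card_filter_add_card_filter_not, Finset.card_univ, hK]
  have htwo : 2 * (NS.card * q) = q^2 - q := by
    have h' : 2 * (NS.card * q) = (NS.card * 2) * q := by ring
    rw [h', hNS2, Nat.sub_mul, one_mul, pow_two]
  have hQle : q ≤ q^2 := by nlinarith
  refine ⟨?_, ?_, ?_, ?_, ?_, ?_⟩
  · rw [hsubcard 0, homega0]
    have h1 : 0 < (Finset.univ.filter (fun b : K => ¬((b-1) + (b-1)^q ∈ NS))).card :=
      Finset.card_pos.mpr ⟨1, hmem1⟩
    rw [hmemcard] at hsplitcnt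
    omega
  · rw [hsubcard 2, homega2]
    exact htwo
  · rw [hsubcard q, homegaq]
  · intro b
    rw [hdelta b]
    split_ifs <;> omega
  · intro b _ hb1 _
    rw [hdelta b, if_neg hb1]
    split_ifs <;> omega
  · have h1NS : 1 ≤ NS.card := by omega
    have hC2 : 3 ≤ (Finset.univ.filter (fun b : K => (b-1) + (b-1)^q ∈ NS)).card := by
      rw [hmemcard]
      calc 3 ≤ q := hq3
        _ = 1 * q := (one_mul q).symm
        _ ≤ NS.card * q := Nat.mul_le_mul_right q h1NS
    have h2 : ({(0:K), -1} : Finset K).card ≤ 2 :=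
      (Finset.card_insert_le _ _).trans (by simp)
    have hge := Finset.le_card_sdiff ({(0:K), -1} : Finset K)
      (Finset.univ.filter (fun b : K => (b-1) + (b-1)^q ∈ NS))
    have hsd : 0 < ((Finset.univ.filter (fun b : K => (b-1) + (b-1)^q ∈ NS))
        \ ({(0:K), -1} : Finset K)).card := by omega
    obtain ⟨b, hb⟩ := Finset.card_pos.mp hsd
    rw [Finset.mem_sdiff] at hb
    obtain ⟨hbB, hbn⟩ := hb
    simp only [Finset.mem_insert, Finset.mem_singleton, not_or] at hbn
    have hbmem : (b-1) + (b-1)^q ∈ NS := (Finset.mem_filter.mp hbB).2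
    have hb1 : b ≠ 1 := by
      intro h
      rw [h, h10] at hbmem
      exact hNS0 hbmem
    refine ⟨b, hbn.1, hb1, hbn.2, ?_⟩
    rw [hdelta b, if_neg hb1, if_pos hbmem]
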